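/- Let n ≥ 1, fix i ∈ {1,…,n}, and let b_1,…,b_n be integers with b_i = 0. Let h, h', g_1,…,g_n be integers with g_i = h − h', and for j ≠ i set g'_j = g_j − h'·[b_j]_+ + h·[−b_j]_+, where [a]_+ = max(a,0). In the field ℚ(x_1,…,x_n) of rational functions in n variables over ℚ, set ŷ = ∏_{ℓ=1}^n x_ℓ^{b_ℓ} and X* = x_i^{-1}·(∏_{ℓ=1}^n x_ℓ^{[b_ℓ]_+} + ∏_{ℓ=1}^n x_ℓ^{[−b_ℓ]_+}). Then the following identity holds: (X*)^{−g_i} · (∏_{j≠i} x_j^{g'_j}) · (1 + ŷ^{-1})^{−h'} · (1 + ŷ)^{h} · ∏_{ℓ=1}^n x_ℓ^{−g_ℓ} = 1. -/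

import Mathlib

open MvPolynomial
set_option maxHeartbeats 1000000

/-- The key computational identity in the proof of the substitution formula for
cluster characters (Corollary 4.14 of the paper): in the rational function field
`ℚ(x₁,…,x_n)`, with `b_i = 0`, `g_i = h - h'` and
`g'_j = g_j - h'·[b_j]₊ + h·[-b_j]₊` for `j ≠ i`, setting `ŷ = ∏ x_ℓ^{b_ℓ}` and
`X* = x_i⁻¹·(∏ x_ℓ^{[b_ℓ]₊} + ∏ x_ℓ^{[-b_ℓ]₊})`, one has
`(X*)^{-g_i} · ∏_{j≠i} x_j^{g'_j} · (1 + ŷ⁻¹)^{-h'} · (1 + ŷ)^{h} · ∏ x_ℓ^{-g_ℓ} = 1`. -/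
theorem substitution_identity
    (n : ℕ) (hn : 1 ≤ n) (i : Fin n) (b : Fin n → ℤ) (hb : b i = 0)
    (h h' : ℤ) (g g' : Fin n → ℤ)
    (hg : g i = h - h')
    (hg' : ∀ j : Fin n, j ≠ i → g' j = g j - h' * max (b j) 0 + h * max (- b j) 0) :
    let K := FractionRing (MvPolynomial (Fin n) ℚ)
    let x : Fin n → K := fun ℓ => algebraMap (MvPolynomial (Fin n) ℚ) K (X ℓ)
    let yhat : K := ∏ ℓ, x ℓ ^ (b ℓ)
    let Xstar : K := (x i)⁻¹ *
      ((∏ ℓ, x ℓ ^ (max (b ℓ) 0)) + ∏ ℓ, x ℓ ^ (max (- b ℓ) 0))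
    Xstar ^ (- g i) * (∏ j ∈ Finset.univ.erase i, x j ^ (g' j)) *
        (1 + yhat⁻¹) ^ (- h') * (1 + yhat) ^ h * (∏ ℓ, x ℓ ^ (- g ℓ)) = 1 := by
  intro K x yhat Xstar
  have hinj : Function.Injective (algebraMap (MvPolynomial (Fin n) ℚ) K) :=
    IsFractionRing.injective _ _
  have hx : ∀ ℓ : Fin n, x ℓ ≠ 0 := by
    intro ℓ
    simpa [x, map_eq_zero_iff _ hinj] using (MvPolynomial.X_ne_zero (R := ℚ) ℓ)
  set P : K := ∏ ℓ, x ℓ ^ (max (b ℓ) 0) with hPdef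
  set M : K := ∏ ℓ, x ℓ ^ (max (- b ℓ) 0) with hMdef
  have hP : P ≠ 0 := Finset.prod_ne_zero_iff.mpr fun ℓ _ => zpow_ne_zero _ (hx ℓ)
  have hM : M ≠ 0 := Finset.prod_ne_zero_iff.mpr fun ℓ _ => zpow_ne_zero _ (hx ℓ)
  -- P + M is nonzero: it comes from a polynomial whose evaluation at 1 is 2
  have hS : P + M ≠ 0 := by
    set p : MvPolynomial (Fin n) ℚ := ∏ ℓ, X ℓ ^ ((max (b ℓ) 0).toNat) with hpdef
    set m : MvPolynomial (Fin n) ℚ := ∏ ℓ, X ℓ ^ ((max (- b ℓ) 0).toNat) with hmdef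
    have hPp : P = algebraMap (MvPolynomial (Fin n) ℚ) K p := by
      rw [hpdef, map_prod]
      refine Finset.prod_congr rfl fun ℓ _ => ?_
      rw [map_pow, ← zpow_natCast, Int.toNat_of_nonneg (le_max_right _ _)]
    have hMm : M = algebraMap (MvPolynomial (Fin n) ℚ) K m := by
      rw [hmdef, map_prod]
      refine Finset.prod_congr rfl fun ℓ _ => ?_
      rw [map_pow, ← zpow_natCast, Int.toNat_of_nonneg (le_max_right _ _)]
    have hev : MvPolynomial.eval (fun _ => (1 : ℚ)) (p + m) = 2 := by
      simp [hpdef, hmdef]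
      norm_num
    have hpm : p + m ≠ 0 := by
      intro h0
      rw [h0] at hev
      simp at hev
    rw [hPp, hMm, ← map_add]
    exact fun h0 => hpm (hinj (by simpa using h0))
  have hyhat : yhat = P * M⁻¹ := by
    rw [hPdef, hMdef, ← Finset.prod_inv_distrib, ← Finset.prod_mul_distrib]
    refine Finset.prod_congr rfl fun ℓ _ => ?_
    rw [← zpow_neg, ← zpow_add₀ (hx ℓ)]
    congr 1
    omega
  have h1 : 1 + yhat = (P + M) * M⁻¹ := by
    rw [hyhat]
    rw [add_mul, mul_inv_cancel₀ hM]
    ring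
  have h2 : 1 + yhat⁻¹ = (P + M) * P⁻¹ := by
    rw [hyhat]
    rw [mul_inv, inv_inv, add_mul, mul_inv_cancel₀ hP]
    ring
  have hXs : Xstar = (P + M) * (x i)⁻¹ := by
    show (x i)⁻¹ * (P + M) = _
    ring
  have e1 : Xstar ^ (- g i) = (P + M) ^ (- g i) * x i ^ (g i) := by
    rw [hXs, mul_zpow, inv_zpow, ← zpow_neg, neg_neg]
  have e2 : (1 + yhat⁻¹) ^ (- h') = (P + M) ^ (- h') * P ^ h' := by
    rw [h2, mul_zpow, inv_zpow, ← zpow_neg, neg_neg]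
  have e3 : (1 + yhat) ^ h = (P + M) ^ h * M ^ (- h) := by
    rw [h1, mul_zpow, inv_zpow, ← zpow_neg]
  rw [e1, e2, e3]
  have hScomb : (P + M) ^ (- g i) * (P + M) ^ (- h') * (P + M) ^ h = 1 := by
    rw [← zpow_add₀ hS, ← zpow_add₀ hS]
    have : - g i + - h' + h = 0 := by omega
    rw [this, zpow_zero]
  -- Combine everything into a single product over ℓ
  set E : Fin n → ℤ := fun ℓ => if ℓ = i then g i else g' ℓ with hEdef
  have hA : x i ^ (g i) * (∏ j ∈ Finset.univ.erase i, x j ^ (g' j))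
      = ∏ ℓ, x ℓ ^ (E ℓ) := by
    rw [← Finset.mul_prod_erase Finset.univ (fun ℓ => x ℓ ^ (E ℓ)) (Finset.mem_univ i)]
    congr 1
    · simp [hEdef]
    · exact (Finset.prod_congr rfl fun j hj => by
        simp [hEdef, (Finset.mem_erase.mp hj).1])
  have hPp : P ^ h' = ∏ ℓ, x ℓ ^ (max (b ℓ) 0 * h') := by
    rw [hPdef, ← Finset.prod_zpow]
    exact Finset.prod_congr rfl fun ℓ _ => by rw [← zpow_mul]
  have hMp : M ^ (- h) = ∏ ℓ, x ℓ ^ (max (- b ℓ) 0 * (- h)) := by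
    rw [hMdef, ← Finset.prod_zpow]
    exact Finset.prod_congr rfl fun ℓ _ => by rw [← zpow_mul]
  calc (P + M) ^ (- g i) * x i ^ (g i) * (∏ j ∈ Finset.univ.erase i, x j ^ (g' j)) *
        ((P + M) ^ (- h') * P ^ h') * ((P + M) ^ h * M ^ (- h)) *
        (∏ ℓ, x ℓ ^ (- g ℓ))
      = ((P + M) ^ (- g i) * (P + M) ^ (- h') * (P + M) ^ h) *
        ((x i ^ (g i) * (∏ j ∈ Finset.univ.erase i, x j ^ (g' j))) * P ^ h' *
          M ^ (- h) * (∏ ℓ, x ℓ ^ (- g ℓ))) := by ring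
    _ = 1 := by
        rw [hScomb, one_mul, hA, hPp, hMp, ← Finset.prod_mul_distrib,
          ← Finset.prod_mul_distrib, ← Finset.prod_mul_distrib]
        refine Finset.prod_eq_one fun ℓ _ => ?_
        rw [← zpow_add₀ (hx ℓ), ← zpow_add₀ (hx ℓ), ← zpow_add₀ (hx ℓ)]
        convert zpow_zero (x ℓ) using 2
        by_cases hℓ : ℓ = i
        · subst hℓ; simp [hEdef, hb]
        · have := hg' ℓ hℓ
          simp only [hEdef, if_neg hℓ]
          linarith [this]
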